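/- For every n ≥ 1 and every i with 1 ≤ i ≤ n one has τₙ ∘ σᵢ = σ_{i-1} ∘ τ_{n+1} as linear maps H^{⊗(n+1)} → H^{⊗n}. -/

import Mathlib

/-!
Let `H` be a Hopf algebra over `ℂ` with coproduct `Δ = Coalgebra.comul`, counit
`ε = Coalgebra.counit`, antipode `S = HopfAlgebra.antipode` and unit `1`.  We fix a
character `δ : H →ₐ[ℂ] ℂ`.  The `δ`-twisted antipode is the linear map
`S̃(h) = ∑ δ(h₍₁₎) S(h₍₂₎)`.
-/

open TensorProduct

noncomputable section

variable (H : Type) [Ring H] [HopfAlgebra ℂ H]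

/-- The `δ`-twisted antipode `S̃(h) = ∑ δ(h₍₁₎) S(h₍₂₎)`. -/
def twistedAntipode (δ : H →ₐ[ℂ] ℂ) : H →ₗ[ℂ] H :=
  (TensorProduct.lid ℂ H).toLinearMap ∘ₗ
    (TensorProduct.map δ.toLinearMap (HopfAlgebra.antipode (R := ℂ))) ∘ₗ
      Coalgebra.comul

/-- A type bundled with a `ℂ`-algebra structure (used to form iterated tensor powers). -/
structure AlgPack : Type 1 where
  carrier : Type
  [ring : Ring carrier]
  [alg : Algebra ℂ carrier]

attribute [instance] AlgPack.ring AlgPack.alg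

/-- The iterated tensor powers of `H`: `XB H n` bundles `H^{⊗(n+1)}` together with its
(componentwise) algebra structure coming from `Algebra.TensorProduct`. -/
def XB : ℕ → AlgPack
  | 0 => ⟨H⟩
  | n + 1 => ⟨H ⊗[ℂ] (XB n).carrier⟩

/-- `X H n` is the tensor power `H^{⊗(n+1)}`; its multiplication `*` is the componentwise
product and its unit `1` is `1 ⊗ ... ⊗ 1`. -/
abbrev X (n : ℕ) : Type := (XB H n).carrier

/-- The pure tensor `h 0 ⊗ h 1 ⊗ ... ⊗ h n ∈ H^{⊗(n+1)}`. -/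
def tp : ∀ n, (Fin (n + 1) → H) → X H n
  | 0, h => h 0
  | n + 1, h => h 0 ⊗ₜ[ℂ] tp n (Fin.tail h)

/-- The `n`-fold iterated coproduct `Δ⁽ⁿ⁾ : H →ₗ H^{⊗(n+1)}`. -/
def Δiter : ∀ n, H →ₗ[ℂ] X H n
  | 0 => LinearMap.id
  | n + 1 => (TensorProduct.map LinearMap.id (Δiter n)) ∘ₗ Coalgebra.comul

/-- The face operators `δᵢ : H^{⊗(n+1)} →ₗ H^{⊗(n+2)}` (`0 ≤ i ≤ n + 2`):
`δ₀ = 1 ⊗ ·`, `δⱼ` applies `Δ` to the `j`-th factor for `1 ≤ j ≤ n + 1`, and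
`δ_{n+2}` appends `1` on the right. -/
def dX : ℕ → ∀ n, X H n →ₗ[ℂ] X H (n + 1)
  | 0, n => TensorProduct.mk ℂ H (X H n) 1
  | 1, 0 => (Coalgebra.comul : H →ₗ[ℂ] H ⊗[ℂ] H)
  | 1, n + 1 => (TensorProduct.assoc ℂ H H (X H n)).toLinearMap ∘ₗ
      (TensorProduct.map Coalgebra.comul LinearMap.id)
  | _ + 2, 0 => (TensorProduct.mk ℂ H H).flip 1
  | i + 2, n + 1 => TensorProduct.map LinearMap.id (dX (i + 1) n)

/-- The degeneracy operators `σᵢ : H^{⊗(n+2)} →ₗ H^{⊗(n+1)}` (`0 ≤ i ≤ n + 1`):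
`σᵢ` applies the counit `ε` to the `(i+1)`-st factor. -/
def sX : ℕ → ∀ n, X H (n + 1) →ₗ[ℂ] X H n
  | 0, n => (TensorProduct.lid ℂ (X H n)).toLinearMap ∘ₗ
      TensorProduct.map Coalgebra.counit LinearMap.id
  | _ + 1, 0 => (TensorProduct.rid ℂ H).toLinearMap ∘ₗ
      TensorProduct.map LinearMap.id (Coalgebra.counit : H →ₗ[ℂ] ℂ)
  | i + 1, n + 1 => TensorProduct.map LinearMap.id (sX i n)

/-- Appending `1 ∈ H` on the right: `h¹ ⊗ ... ⊗ h^{n+1} ↦ h¹ ⊗ ... ⊗ h^{n+1} ⊗ 1`. -/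
def appOne : ∀ n, X H n →ₗ[ℂ] X H (n + 1)
  | 0 => (TensorProduct.mk ℂ H H).flip 1
  | n + 1 => TensorProduct.map LinearMap.id (appOne n)

/-- The cyclic operator `τₙ : H^{⊗n} →ₗ H^{⊗n}` (here at index `X H n = H^{⊗(n+1)}`):
`τ(h¹ ⊗ ... ⊗ h^{n+1}) = Δ⁽ⁿ⁾(S̃(h¹)) · (h² ⊗ ... ⊗ h^{n+1} ⊗ 1)`,
where `·` is the componentwise product of `H^{⊗(n+1)}`. -/
def tauX (δ : H →ₐ[ℂ] ℂ) : ∀ n, X H n →ₗ[ℂ] X H n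
  | 0 => twistedAntipode H δ
  | n + 1 => LinearMap.mul' ℂ (X H (n + 1)) ∘ₗ
      TensorProduct.map (Δiter H (n + 1) ∘ₗ twistedAntipode H δ) (appOne H n)


section Aux

lemma sX_zero_tmul (n : ℕ) (h : H) (x : X H n) :
    sX H 0 n (h ⊗ₜ[ℂ] x) = Coalgebra.counit (R := ℂ) h • x := by
  simp only [sX]; rfl

lemma sX_succ_zero_tmul (j : ℕ) (h x : H) :
    sX H (j + 1) 0 (h ⊗ₜ[ℂ] x) = Coalgebra.counit (R := ℂ) x • h := by
  simp only [sX]; rfl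

lemma sX_succ_succ_tmul (j n : ℕ) (h : H) (x : X H (n + 1)) :
    sX H (j + 1) (n + 1) (h ⊗ₜ[ℂ] x) = h ⊗ₜ[ℂ] sX H j n x := by
  simp only [sX]; rfl

lemma appOne_zero_apply (h : H) : appOne H 0 h = h ⊗ₜ[ℂ] (1 : H) := rfl

lemma appOne_succ_tmul (n : ℕ) (h : H) (x : X H n) :
    appOne H (n + 1) (h ⊗ₜ[ℂ] x) = h ⊗ₜ[ℂ] appOne H n x := rfl

/-- Applying a counit to any factor of the iterated coproduct gives back the
iterated coproduct one level down. -/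
lemma sX_comp_Δiter : ∀ (j n : ℕ), sX H j n ∘ₗ Δiter H (n + 1) = Δiter H n
  | 0, n => by
    have key : ∀ t : H ⊗[ℂ] H,
        sX H 0 n (TensorProduct.map LinearMap.id (Δiter H n) t)
          = Δiter H n ((TensorProduct.lid ℂ H)
              (LinearMap.rTensor H (Coalgebra.counit (R := ℂ)) t)) := by
      intro t
      induction t using TensorProduct.induction_on with
      | zero => simp; exact map_zero (sX H 0 n)
      | tmul a b =>
          rw [show (TensorProduct.map LinearMap.id (Δiter H n)) (a ⊗ₜ[ℂ] b)
                = a ⊗ₜ[ℂ] (Δiter H n b) from rfl, sX_zero_tmul]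
          simp
      | add u v hu hv => simp [hu, hv]; exact (map_add (sX H 0 n) _ _).trans (by rw [hu, hv])
    apply LinearMap.ext; intro h
    rw [LinearMap.comp_apply,
      show Δiter H (n + 1) h
        = TensorProduct.map LinearMap.id (Δiter H n) (Coalgebra.comul h) from rfl,
      key, Coalgebra.rTensor_counit_comul]
    simp
  | j + 1, 0 => by
    apply LinearMap.ext; intro h
    rw [LinearMap.comp_apply,
      show Δiter H 1 h
        = TensorProduct.map LinearMap.id LinearMap.id (Coalgebra.comul h) from rfl,
      TensorProduct.map_id]
    show (TensorProduct.rid ℂ H)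
        (LinearMap.lTensor H (Coalgebra.counit (R := ℂ))
          (LinearMap.id (Coalgebra.comul h))) = Δiter H 0 h
    rw [LinearMap.id_apply, Coalgebra.lTensor_counit_comul]
    show (TensorProduct.rid ℂ H) (h ⊗ₜ[ℂ] (1 : ℂ)) = h
    simp
  | j + 1, n + 1 => by
    show TensorProduct.map LinearMap.id (sX H j n) ∘ₗ
        (TensorProduct.map LinearMap.id (Δiter H (n + 1)) ∘ₗ Coalgebra.comul) = _
    rw [← LinearMap.comp_assoc, ← TensorProduct.map_comp, sX_comp_Δiter j n,
      LinearMap.id_comp]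
    rfl

/-- The degeneracies (up to the last index) commute with appending `1` on the right. -/
lemma sX_comp_appOne : ∀ (j k : ℕ), j ≤ k + 1 →
    sX H j (k + 1) ∘ₗ appOne H (k + 1) = appOne H k ∘ₗ sX H j k
  | 0, k, _ => by
    apply TensorProduct.ext'
    intro a b
    show sX H 0 (k + 1) (appOne H (k + 1) (a ⊗ₜ[ℂ] b))
      = appOne H k (sX H 0 k (a ⊗ₜ[ℂ] b))
    rw [appOne_succ_tmul, sX_zero_tmul, sX_zero_tmul, map_smul]
  | 1, 0, _ => by
    apply TensorProduct.ext'
    intro a b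
    show sX H 1 1 (appOne H 1 (a ⊗ₜ[ℂ] b)) = appOne H 0 (sX H 1 0 (a ⊗ₜ[ℂ] b))
    exact (sX_succ_succ_tmul H 0 0 a (appOne H 0 b)).trans
      ((congrArg (fun y => a ⊗ₜ[ℂ] y) (sX_zero_tmul H 0 b 1)).trans
        ((tmul_smul _ _ _).trans
          ((congrArg (appOne H 0) (sX_succ_zero_tmul H 0 a b)).trans (map_smul _ _ _)).symm))
  | j + 2, 0, h => absurd h (by omega)
  | j + 1, k + 1, h => by
    show TensorProduct.map LinearMap.id (sX H j (k + 1)) ∘ₗ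
        TensorProduct.map LinearMap.id (appOne H (k + 1))
        = TensorProduct.map LinearMap.id (appOne H k) ∘ₗ
            TensorProduct.map LinearMap.id (sX H j k)
    rw [← TensorProduct.map_comp, ← TensorProduct.map_comp,
      sX_comp_appOne j k (by omega)]

/-- The degeneracy operators as algebra homomorphisms. -/
def sA : ∀ (i n : ℕ), X H (n + 1) →ₐ[ℂ] X H n
  | 0, n => (Algebra.TensorProduct.lid ℂ (X H n)).toAlgHom.comp
      (Algebra.TensorProduct.map (Bialgebra.counitAlgHom ℂ H) (AlgHom.id ℂ (X H n)))
  | _ + 1, 0 => (Algebra.TensorProduct.rid ℂ ℂ H).toAlgHom.comp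
      (Algebra.TensorProduct.map (AlgHom.id ℂ H) (Bialgebra.counitAlgHom ℂ H))
  | i + 1, n + 1 => Algebra.TensorProduct.map (AlgHom.id ℂ H) (sA i n)

lemma sA_apply : ∀ (i n : ℕ) (x : X H (n + 1)), sA H i n x = sX H i n x
  | 0, n, x => by
    induction x using TensorProduct.induction_on with
    | zero => exact (map_zero (sA H 0 n)).trans (map_zero (sX H 0 n)).symm
    | tmul a b => rw [sX_zero_tmul]; rfl
    | add u v hu hv => exact (map_add (sA H 0 n) u v).trans ((congrArg₂ (· + ·) hu hv).trans (map_add (sX H 0 n) u v).symm)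
  | j + 1, 0, x => by
    induction x using TensorProduct.induction_on with
    | zero => exact (map_zero (sA H (j + 1) 0)).trans (map_zero (sX H (j + 1) 0)).symm
    | tmul a b => refine Eq.trans ?_ (sX_succ_zero_tmul H j a b).symm; rfl
    | add u v hu hv => exact (map_add (sA H (j + 1) 0) u v).trans ((congrArg₂ (· + ·) hu hv).trans (map_add (sX H (j + 1) 0) u v).symm)
  | j + 1, n + 1, x => by
    induction x using TensorProduct.induction_on with
    | zero => exact (map_zero (sA H (j + 1) (n + 1))).trans (map_zero (sX H (j + 1) (n + 1))).symm
    | tmul a b =>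
        rw [sX_succ_succ_tmul, ← sA_apply j n b]
        rfl
    | add u v hu hv => exact (map_add (sA H (j + 1) (n + 1)) u v).trans ((congrArg₂ (· + ·) hu hv).trans (map_add (sX H (j + 1) (n + 1)) u v).symm)

lemma sX_mul (i n : ℕ) (a b : X H (n + 1)) :
    sX H i n (a * b) = sX H i n a * sX H i n b := by
  rw [← sA_apply, ← sA_apply, ← sA_apply, map_mul]

lemma tauX_succ_tmul (δ : H →ₐ[ℂ] ℂ) (n : ℕ) (h : H) (x : X H n) :
    tauX H δ (n + 1) (h ⊗ₜ[ℂ] x)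
      = Δiter H (n + 1) (twistedAntipode H δ h) * appOne H n x := by
  rfl

end Aux

/-- For every `n ≥ 1` and every `i` with `1 ≤ i ≤ n` one has
`τₙ ∘ σᵢ = σ_{i-1} ∘ τ_{n+1}` as linear maps `H^{⊗(n+1)} → H^{⊗n}` (here `n = m + 1`,
`H^{⊗(n+1)} = X H (m+1)`, `H^{⊗n} = X H m`). -/
theorem tauX_comp_s (δ : H →ₐ[ℂ] ℂ) :
    ∀ (m i : ℕ), 1 ≤ i → i ≤ m + 1 →
      tauX H δ m ∘ₗ sX H i m = sX H (i - 1) m ∘ₗ tauX H δ (m + 1) := by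
  intro m i h1 h2
  obtain ⟨j, rfl⟩ : ∃ j, i = j + 1 := ⟨i - 1, by omega⟩
  simp only [Nat.add_sub_cancel]
  cases m with
  | zero =>
      have hj : j = 0 := by omega
      subst hj
      apply TensorProduct.ext'
      intro h x
      show tauX H δ 0 (sX H 1 0 (h ⊗ₜ[ℂ] x)) = sX H 0 0 (tauX H δ 1 (h ⊗ₜ[ℂ] x))
      refine (congrArg (tauX H δ 0) (sX_succ_zero_tmul H 0 h x)).trans ((map_smul _ _ _).trans ?_)
      refine Eq.trans ?_ (congrArg (sX H 0 0) (tauX_succ_tmul H δ 0 h x)).symm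
      rw [sX_mul]
      have e0 : sX H 0 0 (Δiter H (0 + 1) (twistedAntipode H δ h))
          = twistedAntipode H δ h := by
        have := LinearMap.congr_fun (sX_comp_Δiter H 0 0) (twistedAntipode H δ h)
        rw [LinearMap.comp_apply] at this
        exact this.trans rfl
      rw [e0]
      exact ((congrArg (twistedAntipode H δ h * ·) (sX_zero_tmul H 0 x 1)).trans
        ((Algebra.mul_smul_comm _ _ _).trans
          (congrArg (fun y => (Coalgebra.counit : H →ₗ[ℂ] ℂ) x • y) (mul_one _)))).symm
  | succ k =>
      have hj : j ≤ k + 1 := by omega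
      apply TensorProduct.ext'
      intro h x
      show tauX H δ (k + 1) (sX H (j + 1) (k + 1) (h ⊗ₜ[ℂ] x))
        = sX H j (k + 1) (tauX H δ (k + 2) (h ⊗ₜ[ℂ] x))
      rw [sX_succ_succ_tmul, tauX_succ_tmul, tauX_succ_tmul, sX_mul]
      have e1 : sX H j (k + 1) (Δiter H (k + 1 + 1) (twistedAntipode H δ h))
          = Δiter H (k + 1) (twistedAntipode H δ h) := by
        have := LinearMap.congr_fun (sX_comp_Δiter H j (k + 1)) (twistedAntipode H δ h)
        rw [LinearMap.comp_apply] at this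
        exact this
      have e2 : sX H j (k + 1) (appOne H (k + 1) x) = appOne H k (sX H j k x) := by
        have := LinearMap.congr_fun (sX_comp_appOne H j k hj) x
        rw [LinearMap.comp_apply, LinearMap.comp_apply] at this
        exact this
      rw [e1, e2]
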